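/- Let G : (ℝᵐ,0) → (ℝᵖ,0), m ≥ p > 0, be an analytic map germ with Sing G ∩ G⁻¹(0) = {0}. Then G is a nice map germ (NMG): both the image Im G and the image of the singular locus G(Sing G) are well-defined set germs at 0, i.e., for all small enough ε₁, ε₂ > 0 one has (G(B_{ε₁}),0) = (G(B_{ε₂}),0) and (G(Sing G ∩ B_{ε₁}),0) = (G(Sing G ∩ B_{ε₂}),0). -/

import Mathlib

open Metric Set

/-- The singular set of a map `G : ℝᵐ → ℝᵖ`: points where the derivative has rank `< p`. -/
noncomputable def singSet {m p : ℕ}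
    (G : EuclideanSpace ℝ (Fin m) → EuclideanSpace ℝ (Fin p)) :
    Set (EuclideanSpace ℝ (Fin m)) :=
  {x | LinearMap.rank
      ((fderiv ℝ G x : EuclideanSpace ℝ (Fin m) →L[ℝ] EuclideanSpace ℝ (Fin p)) :
        EuclideanSpace ℝ (Fin m) →ₗ[ℝ] EuclideanSpace ℝ (Fin p)) < (p : Cardinal)}

/-- The set of surjective continuous linear maps between finite-dimensional spaces is open. -/
lemma isOpen_surjCLM {E F : Type*} [NormedAddCommGroup E] [NormedSpace ℝ E]
    [NormedAddCommGroup F] [NormedSpace ℝ F] [FiniteDimensional ℝ E] [FiniteDimensional ℝ F] :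
    IsOpen {L : E →L[ℝ] F | Function.Surjective L} := by
  rw [Metric.isOpen_iff]
  intro L₀ hL₀
  obtain ⟨S₀, hS₀⟩ := (L₀ : E →ₗ[ℝ] F).exists_rightInverse_of_surjective
    (LinearMap.range_eq_top.2 hL₀)
  set S : F →L[ℝ] E := LinearMap.toContinuousLinearMap S₀ with hS
  have hS₀' : ∀ y : F, L₀ (S y) = y := by
    intro y
    have := LinearMap.ext_iff.1 hS₀ y
    exact (by simpa using this : L₀ (S₀ y) = y)
  refine ⟨(‖S‖ + 1)⁻¹, by positivity, fun L hL => ?_⟩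
  rw [mem_ball_iff_norm] at hL
  have hnorm : ‖(L - L₀).comp S‖ < 1 := by
    have h1 : ‖(L - L₀).comp S‖ ≤ ‖L - L₀‖ * ‖S‖ := ContinuousLinearMap.opNorm_comp_le _ _
    have h2 : ‖L - L₀‖ * ‖S‖ ≤ ‖L - L₀‖ * (‖S‖ + 1) :=
      mul_le_mul_of_nonneg_left (by linarith) (norm_nonneg _)
    have h3 : ‖L - L₀‖ * (‖S‖ + 1) < (‖S‖ + 1)⁻¹ * (‖S‖ + 1) :=
      mul_lt_mul_of_pos_right hL (by positivity)
    have h4 : (‖S‖ + 1)⁻¹ * (‖S‖ + 1) = 1 := inv_mul_cancel₀ (by positivity)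
    linarith
  have hnorm' : ‖-((L - L₀).comp S)‖ < 1 := by rwa [norm_neg]
  have hLS : L.comp S = 1 - -((L - L₀).comp S) := by
    ext y
    simp only [ContinuousLinearMap.comp_apply, sub_neg_eq_add, ContinuousLinearMap.add_apply,
      ContinuousLinearMap.sub_apply, ContinuousLinearMap.one_apply, hS₀' y]
    abel
  let u : (F →L[ℝ] F)ˣ := Units.oneSub _ hnorm'
  have hu : (u : F →L[ℝ] F) = L.comp S := by rw [hLS]; rfl
  intro y
  refine ⟨S ((↑u⁻¹ : F →L[ℝ] F) y), ?_⟩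
  have : ((u : F →L[ℝ] F) * (↑u⁻¹ : F →L[ℝ] F)) y = y := by
    rw [u.mul_inv]; rfl
  rw [hu] at this
  simpa [ContinuousLinearMap.mul_apply, ContinuousLinearMap.comp_apply] using this

/-- Non-low-rank is equivalent to surjectivity for maps into `ℝᵖ`. -/
lemma not_rank_lt_iff_surj {p : ℕ} {E : Type*} [NormedAddCommGroup E] [NormedSpace ℝ E]
    [FiniteDimensional ℝ E] (L : E →L[ℝ] EuclideanSpace ℝ (Fin p)) :
    ¬ (LinearMap.rank (L : E →ₗ[ℝ] EuclideanSpace ℝ (Fin p)) < (p : Cardinal)) ↔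
      Function.Surjective L := by
  have hrankF : Module.rank ℝ (EuclideanSpace ℝ (Fin p)) = (p : Cardinal) := by
    rw [← Module.finrank_eq_rank, finrank_euclideanSpace_fin]
  constructor
  · intro h
    have hle : LinearMap.rank (L : E →ₗ[ℝ] EuclideanSpace ℝ (Fin p)) ≤ (p : Cardinal) := by
      rw [LinearMap.rank]
      exact hrankF ▸ Submodule.rank_le _
    have heq : LinearMap.rank (L : E →ₗ[ℝ] EuclideanSpace ℝ (Fin p)) = (p : Cardinal) :=
      le_antisymm hle (not_lt.1 h)
    have hfr : Module.finrank ℝ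
        ↥(LinearMap.range (L : E →ₗ[ℝ] EuclideanSpace ℝ (Fin p))) = p := by
      have := (Module.finrank_eq_rank ℝ
        ↥(LinearMap.range (L : E →ₗ[ℝ] EuclideanSpace ℝ (Fin p)))).trans heq
      exact_mod_cast this
    have htop : LinearMap.range (L : E →ₗ[ℝ] EuclideanSpace ℝ (Fin p)) = ⊤ :=
      Submodule.eq_top_of_finrank_eq (by rw [hfr, finrank_euclideanSpace_fin])
    intro y
    obtain ⟨x, hx⟩ := LinearMap.range_eq_top.1 htop y
    exact ⟨x, hx⟩
  · intro h
    have htop : LinearMap.range (L : E →ₗ[ℝ] EuclideanSpace ℝ (Fin p)) = ⊤ :=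
      LinearMap.range_eq_top.2 (by simpa using h)
    rw [LinearMap.rank, htop, rank_top, hrankF]
    exact lt_irrefl _

/-- Let `G : (ℝᵐ,0) → (ℝᵖ,0)`, `m ≥ p > 0`, be analytic with
`Sing G ∩ G⁻¹(0) = {0}` (as germs at the origin). Then `G` is a nice map germ: both the
image `Im G` and the image of the singular locus `G(Sing G)` are well-defined set germs
at `0`, i.e. for all small enough `ε₁, ε₂ > 0` the germs of `G(B_{ε₁})` and `G(B_{ε₂})`
coincide, and likewise for `G(Sing G ∩ B_{ε₁})` and `G(Sing G ∩ B_{ε₂})`. -/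
theorem stmt8 {m p : ℕ} (hp : 0 < p) (hpm : p ≤ m)
    (G : EuclideanSpace ℝ (Fin m) → EuclideanSpace ℝ (Fin p))
    (hGan : ∀ x, AnalyticAt ℝ G x) (hG0 : G 0 = 0)
    (hiso : ∃ ε > (0 : ℝ), singSet G ∩ G ⁻¹' {0} ∩ ball 0 ε = {0}) :
    ∃ ε₀ > (0 : ℝ), ∀ ε₁ ε₂, 0 < ε₁ → ε₁ ≤ ε₀ → 0 < ε₂ → ε₂ ≤ ε₀ →
      (∃ δ > (0 : ℝ),
        G '' ball 0 ε₁ ∩ ball 0 δ = G '' ball 0 ε₂ ∩ ball 0 δ) ∧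
      (∃ δ > (0 : ℝ),
        G '' (singSet G ∩ ball 0 ε₁) ∩ ball 0 δ =
          G '' (singSet G ∩ ball 0 ε₂) ∩ ball 0 δ) := by
  classical
  obtain ⟨ε, hε, hiso⟩ := hiso
  have hGcont : Continuous G := continuous_iff_continuousAt.2 fun x => (hGan x).continuousAt
  -- the singular set is closed
  have hclosed : IsClosed (singSet G) := by
    have hcont : Continuous fun x => fderiv ℝ G x :=
      continuous_iff_continuousAt.2 fun x => ((hGan x).fderiv).continuousAt
    have hset : singSet G =
        (fun x => fderiv ℝ G x) ⁻¹'
          {L : EuclideanSpace ℝ (Fin m) →L[ℝ] EuclideanSpace ℝ (Fin p) |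
            Function.Surjective L}ᶜ := by
      ext x
      simp only [singSet, mem_setOf_eq, preimage_compl, mem_compl_iff, mem_preimage]
      rw [← not_rank_lt_iff_surj]
      tauto
    rw [hset]
    exact (isOpen_surjCLM.isClosed_compl).preimage hcont
  -- regular points have surjective derivative
  have hsurj_of_not : ∀ x, x ∉ singSet G → Function.Surjective (fderiv ℝ G x) := by
    intro x hx
    exact (not_rank_lt_iff_surj _).1 hx
  -- points of `singSet` in the small ball where `G` vanishes are `0`
  have hsing0 : ∀ x, x ∈ singSet G → G x = 0 → ‖x‖ < ε → x = 0 := by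
    intro x hx hGx hxe
    have : x ∈ singSet G ∩ G ⁻¹' {0} ∩ ball 0 ε :=
      ⟨⟨hx, by simp [hGx]⟩, by simpa [mem_ball, dist_zero_right] using hxe⟩
    rw [hiso] at this
    exact this
  -- Key compactness lemma
  have key : ∀ (A : Set (EuclideanSpace ℝ (Fin m))), IsClosed A →
      ∀ ε₀ ε' : ℝ, 0 < ε' → ε' ≤ ε₀ →
        (∀ x ∈ A, G x = 0 → ‖x‖ ≤ ε₀ → x = 0) →
        ∃ δ > (0 : ℝ), G '' (A ∩ ball 0 ε₀) ∩ ball 0 δ ⊆ G '' (A ∩ ball 0 ε') := by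
    intro A hA ε₀ ε' hε' hle hA0
    set K := A ∩ (closedBall (0 : EuclideanSpace ℝ (Fin m)) ε₀ \ ball 0 ε') with hK
    have hKc : IsCompact K :=
      ((isCompact_closedBall _ _).diff isOpen_ball).inter_left hA
    have h0 : (0 : EuclideanSpace ℝ (Fin p)) ∉ G '' K := by
      rintro ⟨x, ⟨hxA, hxcb, hxball⟩, hGx⟩
      have hx0 : x = 0 := hA0 x hxA hGx (by simpa [mem_closedBall, dist_zero_right] using hxcb)
      apply hxball
      rw [hx0]
      exact mem_ball_self hε'
    have hGK : IsCompact (G '' K) := hKc.image hGcont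
    obtain ⟨δ, hδ, hball⟩ := Metric.isOpen_iff.1 hGK.isClosed.isOpen_compl 0 h0
    refine ⟨δ, hδ, ?_⟩
    rintro y ⟨⟨x, ⟨hxA, hxb⟩, rfl⟩, hyb⟩
    by_cases hx : x ∈ ball (0 : EuclideanSpace ℝ (Fin m)) ε'
    · exact ⟨x, ⟨hxA, hx⟩, rfl⟩
    · exact absurd
        (mem_image_of_mem G (show x ∈ K from ⟨hxA, ball_subset_closedBall hxb, hx⟩))
        (hball hyb)
  -- From the one-sided inclusions to equality of germs
  have pair : ∀ (A : Set (EuclideanSpace ℝ (Fin m))) (ε₀' : ℝ),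
      (∀ εi : ℝ, 0 < εi → εi ≤ ε₀' →
        ∃ δ > (0 : ℝ), G '' (A ∩ ball 0 ε₀') ∩ ball 0 δ ⊆ G '' (A ∩ ball 0 εi)) →
      ∀ ε₁ ε₂ : ℝ, 0 < ε₁ → ε₁ ≤ ε₀' → 0 < ε₂ → ε₂ ≤ ε₀' →
        ∃ δ > (0 : ℝ),
          G '' (A ∩ ball 0 ε₁) ∩ ball 0 δ = G '' (A ∩ ball 0 ε₂) ∩ ball 0 δ := by
    intro A ε₀' h ε₁ ε₂ h₁ h₁' h₂ h₂'
    obtain ⟨δ₁, hδ₁, hsub₁⟩ := h ε₁ h₁ h₁'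
    obtain ⟨δ₂, hδ₂, hsub₂⟩ := h ε₂ h₂ h₂'
    refine ⟨min δ₁ δ₂, lt_min hδ₁ hδ₂, ?_⟩
    have mono : ∀ εi : ℝ, εi ≤ ε₀' → G '' (A ∩ ball 0 εi) ⊆ G '' (A ∩ ball 0 ε₀') :=
      fun εi hεi => image_mono (inter_subset_inter_right A (ball_subset_ball hεi))
    apply Set.Subset.antisymm
    · rintro y ⟨hy1, hyδ⟩
      refine ⟨hsub₂ ⟨mono ε₁ h₁' hy1, ?_⟩, hyδ⟩
      exact ball_subset_ball (min_le_right δ₁ δ₂) hyδ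
    · rintro y ⟨hy2, hyδ⟩
      refine ⟨hsub₁ ⟨mono ε₂ h₂' hy2, ?_⟩, hyδ⟩
      exact ball_subset_ball (min_le_left δ₁ δ₂) hyδ
  -- open image near a regular zero
  have open_img : ∀ ε' : ℝ, 0 < ε' → ε' ≤ ε →
      (∃ x : EuclideanSpace ℝ (Fin m), x ≠ 0 ∧ ‖x‖ < ε' ∧ G x = 0) →
      ∃ δ > (0 : ℝ), ball (0 : EuclideanSpace ℝ (Fin p)) δ ⊆ G '' ball 0 ε' := by
    intro ε' hε' hε'e hex
    obtain ⟨x, hx0, hxe, hGx⟩ := hex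
    have hxreg : x ∉ singSet G := by
      intro hx
      exact hx0 (hsing0 x hx hGx (lt_of_lt_of_le hxe hε'e))
    have hsurj : Function.Surjective (fderiv ℝ G x) := hsurj_of_not x hxreg
    have hmap := (hGan x).hasStrictFDerivAt.map_nhds_eq_of_surj
      (LinearMap.range_eq_top.2 (by simpa using hsurj))
    have hball_nhds : ball (0 : EuclideanSpace ℝ (Fin m)) ε' ∈ nhds x :=
      isOpen_ball.mem_nhds (by simpa [mem_ball, dist_zero_right] using hxe)
    have himg : G '' ball 0 ε' ∈ nhds (G x) := by
      rw [← hmap]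
      exact Filter.image_mem_map hball_nhds
    rw [hGx] at himg
    obtain ⟨δ, hδ, hsub⟩ := Metric.mem_nhds_iff.1 himg
    exact ⟨δ, hδ, hsub⟩
  -- case split on whether `0` is an isolated zero of `G`
  by_cases hiso0 : ∃ r > (0 : ℝ), ∀ x : EuclideanSpace ℝ (Fin m), G x = 0 → ‖x‖ ≤ r → x = 0
  · -- isolated zero: use properness argument for both parts
    obtain ⟨r, hr, hr0⟩ := hiso0
    refine ⟨min r (ε / 2), lt_min hr (by linarith), fun ε₁ ε₂ h₁ h₁' h₂ h₂' => ?_⟩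
    have hε₀e : min r (ε / 2) ≤ ε / 2 := min_le_right _ _
    have hzero : ∀ x : EuclideanSpace ℝ (Fin m),
        G x = 0 → ‖x‖ ≤ min r (ε / 2) → x = 0 :=
      fun x hGx hx => hr0 x hGx (le_trans hx (min_le_left _ _))
    constructor
    · -- image germ
      have h := pair univ (min r (ε / 2)) (fun εi hεi hεi' => by
        obtain ⟨δ, hδ, hsub⟩ := key univ isClosed_univ (min r (ε / 2)) εi hεi hεi'
          (fun x _ hGx hx => hzero x hGx hx)
        exact ⟨δ, hδ, hsub⟩) ε₁ ε₂ h₁ h₁' h₂ h₂'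
      simpa [Set.univ_inter] using h
    · -- singular image germ
      exact pair (singSet G) (min r (ε / 2)) (fun εi hεi hεi' =>
        key (singSet G) hclosed (min r (ε / 2)) εi hεi hεi'
          (fun x hxA hGx hx =>
            hsing0 x hxA hGx (lt_of_le_of_lt (le_trans hx hε₀e) (by linarith)))) ε₁ ε₂
        h₁ h₁' h₂ h₂'
  · -- zeros accumulate at the origin: the image contains a neighbourhood of `0`
    push_neg at hiso0
    refine ⟨ε / 2, by linarith, fun ε₁ ε₂ h₁ h₁' h₂ h₂' => ?_⟩
    constructor
    · -- image germ: both images contain a ball around `0`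
      have hx : ∀ εi : ℝ, 0 < εi → εi ≤ ε / 2 →
          ∃ δ > (0 : ℝ), ball (0 : EuclideanSpace ℝ (Fin p)) δ ⊆ G '' ball 0 εi := by
        intro εi hεi hεi'
        obtain ⟨x, hGx, hxr, hx0⟩ := hiso0 (εi / 2) (by linarith)
        exact open_img εi hεi (by linarith)
          ⟨x, hx0, lt_of_le_of_lt hxr (by linarith), hGx⟩
      obtain ⟨δ₁, hδ₁, hsub₁⟩ := hx ε₁ h₁ h₁'
      obtain ⟨δ₂, hδ₂, hsub₂⟩ := hx ε₂ h₂ h₂'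
      refine ⟨min δ₁ δ₂, lt_min hδ₁ hδ₂, ?_⟩
      have e₁ : G '' ball 0 ε₁ ∩ ball 0 (min δ₁ δ₂) = ball 0 (min δ₁ δ₂) :=
        Set.inter_eq_self_of_subset_right
          (fun y hy => hsub₁ (ball_subset_ball (min_le_left _ _) hy))
      have e₂ : G '' ball 0 ε₂ ∩ ball 0 (min δ₁ δ₂) = ball 0 (min δ₁ δ₂) :=
        Set.inter_eq_self_of_subset_right
          (fun y hy => hsub₂ (ball_subset_ball (min_le_right _ _) hy))
      rw [e₁, e₂]
    · -- singular image germ: same compactness argument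
      exact pair (singSet G) (ε / 2) (fun εi hεi hεi' =>
        key (singSet G) hclosed (ε / 2) εi hεi hεi'
          (fun x hxA hGx hx =>
            hsing0 x hxA hGx (lt_of_le_of_lt hx (by linarith)))) ε₁ ε₂ h₁ h₁' h₂ h₂'
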